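/- Suppose the eight components ψ_{ς₀ς₁ς₂}(t, s_ph, s_e1, s_e2) are C² on an open subset of ℝ⁴ and satisfy the equal-time evolution equations there. Then for each ς₂ ∈ {−1, +1} the component ψ_{(−1)(+1)ς₂} satisfies the derived second-order equation ((∂_ν − ς₂∂_{s_e2})² − ∂_{s_e1}²)ψ_{(−1)(+1)ς₂} + 2iω ∂_ν ψ_{(−1)(+1)(−ς₂)} = 0, where ∂_ν := ∂_t + ∂_{s_ph}. -/

import Mathlib

open Complex

noncomputable section

/-- Partial derivative (in coordinate `i`) of a complex-valued function on `ℝⁿ`. -/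
def pdC {n : ℕ} (i : Fin n) (f : (Fin n → ℝ) → ℂ) (x : Fin n → ℝ) : ℂ :=
  fderiv ℝ f x (Pi.single i 1)

/-- The null derivative `∂_ν = ∂_t + ∂_{s_ph}` (coordinates `(t, s_ph, s_e1, s_e2)`). -/
def Dnu (f : (Fin 4 → ℝ) → ℂ) (x : Fin 4 → ℝ) : ℂ := pdC 0 f x + pdC 1 f x

lemma pdC_congr {n : ℕ} (i : Fin n) {f g : (Fin n → ℝ) → ℂ} {x : Fin n → ℝ}
    (h : f =ᶠ[nhds x] g) : pdC i f x = pdC i g x := by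
  unfold pdC; rw [h.fderiv_eq]

lemma pdC_add {n : ℕ} (i : Fin n) {f g : (Fin n → ℝ) → ℂ} {x : Fin n → ℝ}
    (hf : DifferentiableAt ℝ f x) (hg : DifferentiableAt ℝ g x) :
    pdC i (fun y => f y + g y) x = pdC i f x + pdC i g x := by
  unfold pdC; rw [fderiv_fun_add hf hg]; simp

lemma pdC_sub {n : ℕ} (i : Fin n) {f g : (Fin n → ℝ) → ℂ} {x : Fin n → ℝ}
    (hf : DifferentiableAt ℝ f x) (hg : DifferentiableAt ℝ g x) :
    pdC i (fun y => f y - g y) x = pdC i f x - pdC i g x := by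
  unfold pdC; rw [fderiv_fun_sub hf hg]; simp

lemma pdC_const_mul {n : ℕ} (i : Fin n) (c : ℂ) {f : (Fin n → ℝ) → ℂ} {x : Fin n → ℝ}
    (hf : DifferentiableAt ℝ f x) :
    pdC i (fun y => c * f y) x = c * pdC i f x := by
  unfold pdC; rw [fderiv_const_mul hf]; simp

lemma pdC_diff {n : ℕ} {f : (Fin n → ℝ) → ℂ} {x : Fin n → ℝ}
    (hf : ContDiffAt ℝ 2 f x) (j : Fin n) :
    DifferentiableAt ℝ (fun y => pdC j f y) x := by
  have h1 : ContDiffAt ℝ 1 (fderiv ℝ f) x := hf.fderiv_right (by norm_num)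
  exact (h1.differentiableAt (by norm_num)).clm_apply (differentiableAt_const _)

lemma pdC_swap {n : ℕ} {f : (Fin n → ℝ) → ℂ} {x : Fin n → ℝ}
    (hf : ContDiffAt ℝ 2 f x) (i j : Fin n) :
    pdC i (fun y => pdC j f y) x = pdC j (fun y => pdC i f y) x := by
  have h1 : ContDiffAt ℝ 1 (fderiv ℝ f) x := hf.fderiv_right (by norm_num)
  have hd : DifferentiableAt ℝ (fderiv ℝ f) x := h1.differentiableAt (by norm_num)
  have hsymm : IsSymmSndFDerivAt ℝ f x := hf.isSymmSndFDerivAt (by norm_num)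
  have key : ∀ v w : Fin n → ℝ,
      fderiv ℝ (fun y => fderiv ℝ f y w) x v = fderiv ℝ (fderiv ℝ f) x v w := by
    intro v w
    rw [fderiv_clm_apply hd (differentiableAt_const _)]
    simp
  show fderiv ℝ (fun y => fderiv ℝ f y (Pi.single j 1)) x (Pi.single i 1)
      = fderiv ℝ (fun y => fderiv ℝ f y (Pi.single i 1)) x (Pi.single j 1)
  rw [key, key, hsymm]

lemma pdC_comb {n : ℕ} (i : Fin n) (c d : ℂ) {p a b : (Fin n → ℝ) → ℂ} {x : Fin n → ℝ}
    (hp : DifferentiableAt ℝ p x) (ha : DifferentiableAt ℝ a x)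
    (hb : DifferentiableAt ℝ b x) :
    pdC i (fun y => p y - c * a y - d * b y) x
      = pdC i p x - c * pdC i a x - d * pdC i b x := by
  have h1 := pdC_sub i (f := fun y => p y - c * a y) (g := fun y => d * b y)
      (hp.sub (ha.const_mul c)) (hb.const_mul d)
  have h2 := pdC_sub i (f := p) (g := fun y => c * a y) hp (ha.const_mul c)
  have h3 := pdC_const_mul i c ha
  have h4 := pdC_const_mul i d hb
  rw [h1, h2, h3, h4]

/-- If the eight components are `C²` on an open set `U ⊆ ℝ⁴` and satisfy
the equal-time evolution equations there, then `ψ_{(−1)(+1)ς₂}` satisfies the derived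
second-order equation `((∂_ν − ς₂∂_{s_e2})² − ∂_{s_e1}²)ψ_{(−1)(+1)ς₂}
  + 2iω∂_νψ_{(−1)(+1)(−ς₂)} = 0`. -/
theorem derived_second_order_equation
    (hbar m_e ω : ℝ) (hhbar : 0 < hbar) (hm : 0 ≤ m_e) (hω : ω = m_e / hbar)
    (U : Set (Fin 4 → ℝ)) (hU : IsOpen U)
    (ψ : ℝ → ℝ → ℝ → (Fin 4 → ℝ) → ℂ)
    (hreg : ∀ ς₀ ∈ ({-1, 1} : Set ℝ), ∀ ς₁ ∈ ({-1, 1} : Set ℝ), ∀ ς₂ ∈ ({-1, 1} : Set ℝ),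
      ContDiffOn ℝ 2 (ψ ς₀ ς₁ ς₂) U)
    (heq : ∀ ς₀ ∈ ({-1, 1} : Set ℝ), ∀ ς₁ ∈ ({-1, 1} : Set ℝ), ∀ ς₂ ∈ ({-1, 1} : Set ℝ),
      ∀ x ∈ U,
        pdC 0 (ψ ς₀ ς₁ ς₂) x - (ς₀ : ℂ) * pdC 1 (ψ ς₀ ς₁ ς₂) x
          - (ς₁ : ℂ) * pdC 2 (ψ ς₀ ς₁ ς₂) x - (ς₂ : ℂ) * pdC 3 (ψ ς₀ ς₁ ς₂) x
          + Complex.I * (ω : ℂ) * ψ ς₀ (-ς₁) ς₂ x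
          + Complex.I * (ω : ℂ) * ψ ς₀ ς₁ (-ς₂) x = 0) :
    ∀ ς₂ ∈ ({-1, 1} : Set ℝ), ∀ x ∈ U,
      (Dnu (fun y => Dnu (ψ (-1) 1 ς₂) y - (ς₂ : ℂ) * pdC 3 (ψ (-1) 1 ς₂) y) x
          - (ς₂ : ℂ) *
            pdC 3 (fun y => Dnu (ψ (-1) 1 ς₂) y - (ς₂ : ℂ) * pdC 3 (ψ (-1) 1 ς₂) y) x)
        - pdC 2 (fun y => pdC 2 (ψ (-1) 1 ς₂) y) x
        + 2 * Complex.I * (ω : ℂ) * Dnu (ψ (-1) 1 (-ς₂)) x = 0 := by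
  intro ς₂ hς₂ x hx
  have hne : (-1 : ℝ) ∈ ({-1, 1} : Set ℝ) := by norm_num
  have hpo : (1 : ℝ) ∈ ({-1, 1} : Set ℝ) := by norm_num
  have hnς : -ς₂ ∈ ({-1, 1} : Set ℝ) := by
    simp only [Set.mem_insert_iff, Set.mem_singleton_iff] at hς₂ ⊢
    rcases hς₂ with h | h <;> rw [h] <;> norm_num
  -- regularity at x
  have hfx : ContDiffAt ℝ 2 (ψ (-1) 1 ς₂) x :=
    (hreg _ hne _ hpo _ hς₂).contDiffAt (hU.mem_nhds hx)
  have hAx : ContDiffAt ℝ 2 (ψ (-1) (-1) ς₂) x :=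
    (hreg _ hne _ hne _ hς₂).contDiffAt (hU.mem_nhds hx)
  have hBx : ContDiffAt ℝ 2 (ψ (-1) 1 (-ς₂)) x :=
    (hreg _ hne _ hpo _ hnς).contDiffAt (hU.mem_nhds hx)
  have dA : DifferentiableAt ℝ (ψ (-1) (-1) ς₂) x := hAx.differentiableAt (by norm_num)
  have dB : DifferentiableAt ℝ (ψ (-1) 1 (-ς₂)) x := hBx.differentiableAt (by norm_num)
  -- the first-order equation for the main component, valid near x
  have hEq : (fun y => pdC 0 (ψ (-1) 1 ς₂) y + pdC 1 (ψ (-1) 1 ς₂) y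
        - (ς₂ : ℂ) * pdC 3 (ψ (-1) 1 ς₂) y)
      =ᶠ[nhds x]
      (fun y => pdC 2 (ψ (-1) 1 ς₂) y
        - Complex.I * (ω : ℂ) * ψ (-1) (-1) ς₂ y
        - Complex.I * (ω : ℂ) * ψ (-1) 1 (-ς₂) y) := by
    filter_upwards [hU.mem_nhds hx] with y hy
    have h := heq (-1) hne 1 hpo ς₂ hς₂ y hy
    push_cast at h
    linear_combination h
  -- cleaned equations for the two other components at x
  have E2 : pdC 0 (ψ (-1) (-1) ς₂) x + pdC 1 (ψ (-1) (-1) ς₂) x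
      + pdC 2 (ψ (-1) (-1) ς₂) x - (ς₂ : ℂ) * pdC 3 (ψ (-1) (-1) ς₂) x
      + Complex.I * (ω : ℂ) * ψ (-1) 1 ς₂ x
      + Complex.I * (ω : ℂ) * ψ (-1) (-1) (-ς₂) x = 0 := by
    have h := heq (-1) hne (-1) hne ς₂ hς₂ x hx
    simp only [neg_neg] at h
    push_cast at h
    linear_combination h
  have E3 : pdC 0 (ψ (-1) 1 (-ς₂)) x + pdC 1 (ψ (-1) 1 (-ς₂)) x
      - pdC 2 (ψ (-1) 1 (-ς₂)) x + (ς₂ : ℂ) * pdC 3 (ψ (-1) 1 (-ς₂)) x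
      + Complex.I * (ω : ℂ) * ψ (-1) (-1) (-ς₂) x
      + Complex.I * (ω : ℂ) * ψ (-1) 1 ς₂ x = 0 := by
    have h := heq (-1) hne 1 hpo (-ς₂) hnς x hx
    simp only [neg_neg] at h
    push_cast at h
    linear_combination h
  -- derivatives of the equation
  have H0 := (pdC_congr 0 hEq).trans
    (pdC_comb 0 (Complex.I * ω) (Complex.I * ω) (pdC_diff hfx 2) dA dB)
  have H1 := (pdC_congr 1 hEq).trans
    (pdC_comb 1 (Complex.I * ω) (Complex.I * ω) (pdC_diff hfx 2) dA dB)
  have H2 := (pdC_congr 2 hEq).trans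
    (pdC_comb 2 (Complex.I * ω) (Complex.I * ω) (pdC_diff hfx 2) dA dB)
  have H3 := (pdC_congr 3 hEq).trans
    (pdC_comb 3 (Complex.I * ω) (Complex.I * ω) (pdC_diff hfx 2) dA dB)
  -- symmetry of second derivatives
  have S0 := pdC_swap hfx 0 2
  have S1 := pdC_swap hfx 1 2
  have S3 := pdC_swap hfx 3 2
  -- linearity of pdC 2 applied to the null-derivative combination
  have G2a := pdC_sub (n := 4) 2
    (f := fun y => pdC 0 (ψ (-1) 1 ς₂) y + pdC 1 (ψ (-1) 1 ς₂) y)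
    (g := fun y => (ς₂ : ℂ) * pdC 3 (ψ (-1) 1 ς₂) y)
    ((pdC_diff hfx 0).add (pdC_diff hfx 1)) ((pdC_diff hfx 3).const_mul _)
  have G2b := pdC_add (n := 4) 2 (pdC_diff hfx 0) (pdC_diff hfx 1)
  have G2c := pdC_const_mul (n := 4) 2 ((ς₂ : ℂ)) (pdC_diff hfx 3)
  simp only [Dnu]
  linear_combination H0 + H1 - (ς₂ : ℂ) * H3 + S0 + S1 - (ς₂ : ℂ) * S3
    - G2a - G2b + G2c + H2
    - Complex.I * (ω : ℂ) * E2 + Complex.I * (ω : ℂ) * E3
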